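/- Let (V, L, ∂) be a crossed module over a Lie algebra with M = ker ∂ and g = coker ∂. Choose a linear section s : g → L of π : L → g (π∘s = id) and a linear section q : Im(∂) → V of ∂ (∂∘q = id). Define g(x,y) = q([s(x), s(y)] - s[x,y]) and θ(x,y,z) = [s(x), g(y,z)] - [s(y), g(x,z)] + [s(z), g(x,y)] - g([x,y], z) + g([x,z], y) - g([y,z], x). Then θ(x,y,z) ∈ ker(∂) = M for all x, y, z ∈ g. -/
import Mathlib


variable {K L V g : Type} [Field K] [LieRing L] [LieAlgebra K L]
  [AddCommGroup V] [Module K V] [LieRingModule L V] [LieModule K L V]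
  [LieRing g] [LieAlgebra K g]

/-- `g(x,y) = q([s(x), s(y)] - s[x,y])`. -/
def gAux (s : g →ₗ[K] L) (q : L →ₗ[K] V) (x y : g) : V :=
  q (⁅s x, s y⁆ - s ⁅x, y⁆)

/-- The `3`-cochain `θ` associated to a crossed module with chosen sections `s`, `q`. -/
def theta (s : g →ₗ[K] L) (q : L →ₗ[K] V) (x y z : g) : V :=
  ⁅s x, gAux s q y z⁆ - ⁅s y, gAux s q x z⁆ + ⁅s z, gAux s q x y⁆
    - gAux s q ⁅x, y⁆ z + gAux s q ⁅x, z⁆ y - gAux s q ⁅y, z⁆ x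

/-- with `(V, L, ∂)` a crossed module, `π : L → g = coker ∂` and sections
`s` of `π` and `q` of `∂`, the cochain `θ` takes values in `M = ker ∂`. -/
theorem crossed_ext_stmt5
    (d : V →ₗ[K] L)
    (hmod : ∀ (x : L) (v : V), d ⁅x, v⁆ = ⁅x, d v⁆)
    (hcross : ∀ v w : V, ⁅d v, w⁆ = - ⁅d w, v⁆)
    (π : L →ₗ⁅K⁆ g) (hπ : Function.Surjective π)
    (hker : ∀ z : L, π z = 0 ↔ z ∈ LinearMap.range d)
    (s : g →ₗ[K] L) (hs : ∀ x : g, π (s x) = x)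
    (q : L →ₗ[K] V) (hq : ∀ z ∈ LinearMap.range d, d (q z) = z) :
    ∀ x y z : g, d (theta s q x y z) = 0 := by
  
  have key : ∀ a b : g, d (gAux s q a b) = ⁅s a, s b⁆ - s ⁅a, b⁆ := by
    intro a b
    exact hq _ ((hker _).mp (by simp [hs]))
  intro x y z
  have e2 : (⁅z, x⁆ : g) = -⁅x, z⁆ := by rw [← lie_skew]
  have e3 : (⁅y, x⁆ : g) = -⁅x, y⁆ := by rw [← lie_skew]
  have jL : ⁅s x, ⁅s y, s z⁆⁆ - ⁅s y, ⁅s x, s z⁆⁆ + ⁅s z, ⁅s x, s y⁆⁆ = (0 : L) := by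
    rw [← lie_lie, ← lie_skew]; abel
  have jg0 : (⁅x, ⁅y, z⁆⁆ - ⁅y, ⁅x, z⁆⁆ + ⁅z, ⁅x, y⁆⁆ : g) = 0 := by
    rw [← lie_lie, ← lie_skew]; abel
  have jg : s ⁅x, ⁅y, z⁆⁆ - s ⁅y, ⁅x, z⁆⁆ + s ⁅z, ⁅x, y⁆⁆ = (0 : L) := by
    have := congrArg s jg0
    simpa using this
  simp only [theta, map_sub, map_add, hmod, key, lie_sub, sub_lie, lie_lie,
    ← lie_skew (s ⁅x, y⁆) (s z), ← lie_skew (s ⁅x, z⁆) (s y), ← lie_skew (s ⁅y, z⁆) (s x),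
    e2, e3, lie_neg, map_neg]
  rw [show (⁅z, y⁆ : g) = -⁅y, z⁆ from by rw [← lie_skew]]
  simp only [lie_neg, map_neg]
  linear_combination (norm := abel) jL + 2 • jg
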